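/- If the local Farkas–Minkowski constraint qualification (LFMCQ) holds at x̂ ∈ S, then x̂ is a weak efficient solution of (P) if and only if the weak KKT condition holds at x̂. -/

import Mathlib

open Set Filter Topology
open scoped RealInnerProductSpace Pointwise

noncomputable section

namespace MOSIP

variable {n : ℕ} {T : Type*} {p : ℕ}

/-- The decision space `ℝ^n`. -/
abbrev Eucl (n : ℕ) := EuclideanSpace ℝ (Fin n)

/-- Subdifferential of a real-valued function. -/
def subdiff (h : Eucl n → ℝ) (x : Eucl n) : Set (Eucl n) :=
  {ξ | ∀ y, h x + ⟪ξ, y - x⟫ ≤ h y}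

/-- Subdifferential of an extended-real-valued function. -/
def subdiffE (h : Eucl n → EReal) (x : Eucl n) : Set (Eucl n) :=
  {ξ | ∀ y, h x + ((⟪ξ, y - x⟫ : ℝ) : EReal) ≤ h y}

/-- Convexity of an extended-real-valued function. -/
def ConvexE (h : Eucl n → EReal) : Prop :=
  ∀ x y : Eucl n, ∀ a b : ℝ, 0 ≤ a → 0 ≤ b → a + b = 1 →
    h (a • x + b • y) ≤ (a : EReal) * h x + (b : EReal) * h y

/-- Proper (with values in `ℝ ∪ {+∞}`): never `−∞` and not identically `+∞`. -/
def ProperE (h : Eucl n → EReal) : Prop :=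
  (∀ x, h x ≠ ⊥) ∧ (∃ x, h x ≠ ⊤)

/-- Feasible set `S` of the problem `(P)`. -/
def feasSet (g : T → Eucl n → EReal) : Set (Eucl n) := {x | ∀ t, g t x ≤ 0}

/-- Active indices `T(x)`. -/
def activeIx (g : T → Eucl n → EReal) (x : Eucl n) : Set T := {t | g t x = 0}

/-- `ε`-active indices `T_ε(x)`. -/
def activeIxEps (g : T → Eucl n → EReal) (x : Eucl n) (ε : ℝ) : Set T :=
  {t | ((-ε : ℝ) : EReal) ≤ g t x}

/-- `F(xh) = ⋃ i, ∂f_i(xh)`. -/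
def FSet (f : Fin p → Eucl n → ℝ) (x : Eucl n) : Set (Eucl n) := ⋃ i, subdiff (f i) x

/-- `G(xh) = ⋃_{t ∈ T(xh)} ∂g_t(xh)`. -/
def GSet (g : T → Eucl n → EReal) (x : Eucl n) : Set (Eucl n) :=
  ⋃ t ∈ activeIx g x, subdiffE (g t) x

/-- The smallest convex cone containing `M` and `0`: all finite nonnegative combinations. -/
def coneHull (M : Set (Eucl n)) : Set (Eucl n) :=
  {x | ∃ (s : Finset (Eucl n)) (c : Eucl n → ℝ), ↑s ⊆ M ∧ (∀ v ∈ s, 0 ≤ c v) ∧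
    x = ∑ v ∈ s, c v • v}

/-- Negative polar cone `M⁰`. -/
def negPolar (M : Set (Eucl n)) : Set (Eucl n) := {d | ∀ ξ ∈ M, ⟪ξ, d⟫ ≤ 0}

/-- Strictly negative polar cone `M⁻`. -/
def strictNegPolar (M : Set (Eucl n)) : Set (Eucl n) := {d | ∀ ξ ∈ M, ⟪ξ, d⟫ < 0}

/-- Contingent (Bouligand tangent) cone of `M` at `x`. -/
def contingentCone (M : Set (Eucl n)) (x : Eucl n) : Set (Eucl n) :=
  {v | ∃ (τ : ℕ → ℝ) (w : ℕ → Eucl n), (∀ r, 0 < τ r) ∧ Tendsto τ atTop (𝓝 0) ∧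
    Tendsto w atTop (𝓝 v) ∧ ∀ r, x + τ r • w r ∈ M}

/-- Normal cone `N(M, x) := C(M, x)⁰`. -/
def normalCone (M : Set (Eucl n)) (x : Eucl n) : Set (Eucl n) :=
  negPolar (contingentCone M x)

/-- Weak efficient solution. -/
def WeakEff (f : Fin p → Eucl n → ℝ) (S : Set (Eucl n)) (xh : Eucl n) : Prop :=
  ¬ ∃ x ∈ S, ∀ i, f i x < f i xh

/-- Efficient solution. -/
def Eff (f : Fin p → Eucl n → ℝ) (S : Set (Eucl n)) (xh : Eucl n) : Prop :=
  ¬ ∃ x ∈ S, (∀ i, f i x ≤ f i xh) ∧ ∃ j, f j x < f j xh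

/-- Isolated efficient solution with constant `ν`:
`max_i (f_i(x) − f_i(xh)) ≥ ν‖x − xh‖` on `S`. -/
def IsolatedEff (f : Fin p → Eucl n → ℝ) (S : Set (Eucl n)) (xh : Eucl n) (ν : ℝ) : Prop :=
  ∀ x ∈ S, ∃ i, ν * ‖x - xh‖ ≤ f i x - f i xh

/-- `w ∈ Σ α_i ∂f_i(xh) + Σ_{t ∈ T*} β_t ∂g_t(xh)` with multipliers as described,
where `Nonneg`/`Pos` refers to the sign condition on the `α_i`. -/
def KKTPoint (f : Fin p → Eucl n → ℝ) (g : T → Eucl n → EReal) (xh : Eucl n)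
    (w : Eucl n) : Prop :=
  ∃ (α : Fin p → ℝ) (Ts : Finset T) (β : T → ℝ) (ξ : Fin p → Eucl n) (ζ : T → Eucl n),
    (∀ i, 0 ≤ α i) ∧ ∑ i, α i = 1 ∧ (∀ t ∈ Ts, t ∈ activeIx g xh) ∧
    (∀ t ∈ Ts, 0 ≤ β t) ∧ (∀ i, ξ i ∈ subdiff (f i) xh) ∧
    (∀ t ∈ Ts, ζ t ∈ subdiffE (g t) xh) ∧
    ∑ i, α i • ξ i + ∑ t ∈ Ts, β t • ζ t = w

/-- The weak KKT condition at `xh`. -/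
def WeakKKT (f : Fin p → Eucl n → ℝ) (g : T → Eucl n → EReal) (xh : Eucl n) : Prop :=
  KKTPoint f g xh 0

/-- The strong KKT condition at `xh` (all objective multipliers positive). -/
def StrongKKT (f : Fin p → Eucl n → ℝ) (g : T → Eucl n → EReal) (xh : Eucl n) : Prop :=
  ∃ (α : Fin p → ℝ) (Ts : Finset T) (β : T → ℝ) (ξ : Fin p → Eucl n) (ζ : T → Eucl n),
    (∀ i, 0 < α i) ∧ ∑ i, α i = 1 ∧ (∀ t ∈ Ts, t ∈ activeIx g xh) ∧
    (∀ t ∈ Ts, 0 ≤ β t) ∧ (∀ i, ξ i ∈ subdiff (f i) xh) ∧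
    (∀ t ∈ Ts, ζ t ∈ subdiffE (g t) xh) ∧
    ∑ i, α i • ξ i + ∑ t ∈ Ts, β t • ζ t = 0

/-- The perturbed KKT condition at `xh` with constant `ν`. -/
def PerturbedKKT (f : Fin p → Eucl n → ℝ) (g : T → Eucl n → EReal) (xh : Eucl n)
    (ν : ℝ) : Prop :=
  ∀ w : Eucl n, ‖w‖ ≤ ν → KKTPoint f g xh w

/-- The gap function `ϑ(x, ξ, λ) = sup_{y ∈ S} Σ_i λ_i ⟪ξ_i, x − y⟫`. -/
def gapFn (S : Set (Eucl n)) (x : Eucl n) (ξ : Fin p → Eucl n) (lam : Fin p → ℝ) : EReal :=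
  ⨆ y ∈ S, ((∑ i, lam i * ⟪ξ i, x - y⟫ : ℝ) : EReal)

/-- The unit simplex of multipliers. -/
def simplex (lam : Fin p → ℝ) : Prop := (∀ i, 0 ≤ lam i) ∧ ∑ i, lam i = 1

/-- Supremum (marginal) function `ψ(x) = sup_t g_t(x)`. -/
def supFn (g : T → Eucl n → EReal) (x : Eucl n) : EReal := ⨆ t, g t x

/-- Directional derivative of a convex extended-real-valued function,
`h'(x; d) = inf_{τ > 0} (h(x + τ d) − h(x))/τ` (the limit as `τ ↓ 0`). -/
def dirDeriv (h : Eucl n → EReal) (x d : Eucl n) : EReal :=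
  ⨅ τ ∈ Ioi (0 : ℝ), (h (x + τ • d) - h x) * ((τ⁻¹ : ℝ) : EReal)

/-- Every constraint is (real-valued and) continuously differentiable around `xh`,
with gradient `gr t` at `xh`. -/
def SmoothConstraintsAt (g : T → Eucl n → EReal) (gr : T → Eucl n) (xh : Eucl n) : Prop :=
  ∀ t, ∃ (h : Eucl n → ℝ) (U : Set (Eucl n)), U ∈ 𝓝 xh ∧ (∀ y ∈ U, g t y = (h y : EReal)) ∧
    ContDiffOn ℝ 1 h U ∧ gradient h xh = gr t

/-- Slater CQ. -/
def SCQ (g : T → Eucl n → EReal) : Prop := ∃ x₀ : Eucl n, ∀ t, g t x₀ < 0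

/-- Mangasarian–Fromovitz CQ at `xh`. -/
def MFCQ (g : T → Eucl n → EReal) (xh : Eucl n) : Prop :=
  (GSet g xh).Nonempty ∧ (strictNegPolar (GSet g xh)).Nonempty

/-- Perturbed Mangasarian–Fromovitz CQ at `xh`. -/
def PMFCQ (g : T → Eucl n → EReal) (xh : Eucl n) : Prop :=
  ∃ xs : Eucl n,
    (⨅ ε ∈ Ioi (0 : ℝ), ⨆ ξ ∈ ⋃ t ∈ activeIxEps g xh ε, subdiffE (g t) xh,
      ((⟪ξ, xs⟫ : ℝ) : EReal)) < 0

/-- Local Farkas–Minkowski CQ at `xh`. -/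
def LFMCQ (g : T → Eucl n → EReal) (xh : Eucl n) : Prop :=
  normalCone (feasSet g) xh = coneHull (GSet g xh)

/-- Closed cone CQ at `xh`. -/
def CCCQ (g : T → Eucl n → EReal) (xh : Eucl n) : Prop :=
  IsClosed (coneHull (GSet g xh))

/-- Abadie CQ at `xh`. -/
def ACQ (g : T → Eucl n → EReal) (xh : Eucl n) : Prop :=
  (GSet g xh).Nonempty ∧ negPolar (GSet g xh) ⊆ contingentCone (feasSet g) xh

/-- Kuhn–Tucker CQ at `xh`. -/
def KTCQ (g : T → Eucl n → EReal) (xh : Eucl n) : Prop :=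
  {d | dirDeriv (supFn g) xh d ≤ 0} ⊆ contingentCone (feasSet g) xh

/-- Pshenichnyi–Levin–Valadier CQ at `xh`. -/
def PLVCQ (g : T → Eucl n → EReal) (xh : Eucl n) : Prop :=
  subdiffE (supFn g) xh ⊆ coneHull (GSet g xh)

/-- Weak Abadie DQ at `xh`. -/
def WADQ (f : Fin p → Eucl n → ℝ) (g : T → Eucl n → EReal) (xh : Eucl n) : Prop :=
  (GSet g xh).Nonempty ∧
    strictNegPolar (FSet f xh) ∩ negPolar (GSet g xh) ⊆ contingentCone (feasSet g) xh

/-- The sublevel sets `Q^i(xh)`. -/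
def QSet (f : Fin p → Eucl n → ℝ) (S : Set (Eucl n)) (xh : Eucl n) (i : Fin p) :
    Set (Eucl n) :=
  {x ∈ S | ∀ l, l ≠ i → f l x ≤ f l xh}

/-- Extended Abadie DQ at `xh`. -/
def EADQ (f : Fin p → Eucl n → ℝ) (g : T → Eucl n → EReal) (xh : Eucl n) : Prop :=
  (GSet g xh).Nonempty ∧
    negPolar (FSet f xh) ∩ negPolar (GSet g xh) ⊆
      ⋂ i, contingentCone (QSet f (feasSet g) xh i) xh

/-- Maeda objective qualification at `xh`. -/
def MOQ (f : Fin p → Eucl n → ℝ) (xh : Eucl n) : Prop :=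
  negPolar (FSet f xh) ⊆ {0} ∪ ⋃ i, strictNegPolar (subdiff (f i) xh)

variable {n p : ℕ} {T : Type*}


lemma subdiff_convex (h : Eucl n → ℝ) (x : Eucl n) : Convex ℝ (subdiff h x) := by
  intro ξ hξ ζ hζ a b ha hb hab y
  have h1 := hξ y
  have h2 := hζ y
  have hin : ⟪a • ξ + b • ζ, y - x⟫ = a * ⟪ξ, y - x⟫ + b * ⟪ζ, y - x⟫ := by
    rw [inner_add_left, real_inner_smul_left, real_inner_smul_left]
  show h x + ⟪a • ξ + b • ζ, y - x⟫ ≤ h y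
  rw [hin]
  have e1 : a * h x + b * h x = h x := by rw [← add_mul, hab, one_mul]
  have e2 : a * h y + b * h y = h y := by rw [← add_mul, hab, one_mul]
  nlinarith [mul_le_mul_of_nonneg_left h1 ha, mul_le_mul_of_nonneg_left h2 hb]

lemma subdiff_isClosed (h : Eucl n → ℝ) (x : Eucl n) : IsClosed (subdiff h x) := by
  have : subdiff h x = ⋂ y, {ξ : Eucl n | h x + ⟪ξ, y - x⟫ ≤ h y} := by
    ext ξ; simp [subdiff, Set.mem_iInter]
  rw [this]
  exact isClosed_iInter fun y =>
    isClosed_le (continuous_const.add ((continuous_id.inner continuous_const))) continuous_const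

lemma slope_mono {f : Eucl n → ℝ} (hf : ConvexOn ℝ univ f) (x v : Eucl n)
    {σ τ : ℝ} (h0 : 0 < σ) (hστ : σ ≤ τ) :
    (f (x + σ • v) - f x) / σ ≤ (f (x + τ • v) - f x) / τ := by
  rcases eq_or_lt_of_le hστ with rfl | hlt
  · exact le_rfl
  have hτ : 0 < τ := h0.trans hlt
  have ha : (0:ℝ) ≤ 1 - σ/τ := by
    rw [sub_nonneg, div_le_one hτ]; exact hστ
  have hb : (0:ℝ) ≤ σ/τ := by positivity
  have hcomb : (1 - σ/τ) • x + (σ/τ) • (x + τ • v) = x + σ • v := by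
    match_scalars <;> field_simp <;> ring
  have key := hf.2 (mem_univ x) (mem_univ (x + τ • v)) ha hb (by ring)
  rw [hcomb] at key
  have key' : f (x + σ • v) ≤ (1 - σ/τ) * f x + (σ/τ) * f (x + τ • v) := key
  rw [div_le_div_iff₀ h0 hτ]
  have hτ' : τ ≠ 0 := ne_of_gt hτ
  have key2 : τ * f (x + σ • v) ≤ (τ - σ) * f x + σ * f (x + τ • v) := by
    have := mul_le_mul_of_nonneg_left key' hτ.le
    calc τ * f (x + σ • v) ≤ τ * ((1 - σ/τ) * f x + (σ/τ) * f (x + τ • v)) := this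
      _ = (τ - σ) * f x + σ * f (x + τ • v) := by field_simp
  nlinarith [key2]

lemma slope_lb {f : Eucl n → ℝ} (hf : ConvexOn ℝ univ f) (x v : Eucl n)
    {τ : ℝ} (hτ : 0 < τ) :
    f x - f (x - v) ≤ (f (x + τ • v) - f x) / τ := by
  have h1τ : (0:ℝ) < 1 + τ := by linarith
  have ha : (0:ℝ) ≤ 1/(1+τ) := by positivity
  have hb : (0:ℝ) ≤ τ/(1+τ) := by positivity
  have hcomb : (1/(1+τ)) • (x + τ • v) + (τ/(1+τ)) • (x - v) = x := by
    match_scalars <;> field_simp <;> ring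
  have key := hf.2 (mem_univ (x + τ • v)) (mem_univ (x - v)) ha hb (by field_simp)
  rw [hcomb] at key
  have key' : f x ≤ (1/(1+τ)) * f (x + τ • v) + (τ/(1+τ)) * f (x - v) := key
  have key2 : (1+τ) * f x ≤ f (x + τ • v) + τ * f (x - v) := by
    have := mul_le_mul_of_nonneg_left key' h1τ.le
    calc (1+τ) * f x ≤ (1+τ) * ((1/(1+τ)) * f (x + τ • v) + (τ/(1+τ)) * f (x - v)) := this
      _ = f (x + τ • v) + τ * f (x - v) := by field_simp
  rw [le_div_iff₀ hτ]
  nlinarith [key2]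

/-- The set of difference quotients. -/
def ddSet (f : Eucl n → ℝ) (x v : Eucl n) : Set ℝ :=
  (fun τ : ℝ => (f (x + τ • v) - f x) / τ) '' Ioi 0

/-- Directional derivative of a finite convex function, as an infimum of
difference quotients. -/
def dd (f : Eucl n → ℝ) (x v : Eucl n) : ℝ := sInf (ddSet f x v)

lemma ddSet_nonempty (f : Eucl n → ℝ) (x v : Eucl n) : (ddSet f x v).Nonempty :=
  ⟨_, 1, mem_Ioi.2 one_pos, rfl⟩

lemma ddSet_bddBelow {f : Eucl n → ℝ} (hf : ConvexOn ℝ univ f) (x v : Eucl n) :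
    BddBelow (ddSet f x v) := by
  refine ⟨f x - f (x - v), ?_⟩
  rintro q ⟨τ, hτ, rfl⟩
  exact slope_lb hf x v hτ

lemma dd_le {f : Eucl n → ℝ} (hf : ConvexOn ℝ univ f) (x v : Eucl n) {τ : ℝ} (hτ : 0 < τ) :
    dd f x v ≤ (f (x + τ • v) - f x) / τ :=
  csInf_le (ddSet_bddBelow hf x v) ⟨τ, hτ, rfl⟩

lemma le_dd {f : Eucl n → ℝ} (x v : Eucl n) {a : ℝ}
    (h : ∀ τ : ℝ, 0 < τ → a ≤ (f (x + τ • v) - f x) / τ) : a ≤ dd f x v := by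
  apply le_csInf (ddSet_nonempty f x v)
  rintro q ⟨τ, hτ, rfl⟩
  exact h τ hτ

lemma dd_lt {f : Eucl n → ℝ} {x v : Eucl n} {b : ℝ} (h : dd f x v < b) :
    ∃ τ : ℝ, 0 < τ ∧ (f (x + τ • v) - f x) / τ < b := by
  obtain ⟨q, ⟨τ, hτ, rfl⟩, hq⟩ := exists_lt_of_csInf_lt (ddSet_nonempty f x v) h
  exact ⟨τ, hτ, hq⟩

lemma dd_zero (f : Eucl n → ℝ) (x : Eucl n) : dd f x 0 = 0 := by
  have : ddSet f x 0 = {0} := by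
    ext q
    constructor
    · rintro ⟨τ, hτ, rfl⟩; simp
    · rintro rfl; exact ⟨1, mem_Ioi.2 one_pos, by simp⟩
  rw [dd, this, csInf_singleton]

lemma dd_smul {f : Eucl n → ℝ} (hf : ConvexOn ℝ univ f) (x : Eucl n) {c : ℝ} (hc : 0 < c)
    (v : Eucl n) : dd f x (c • v) = c * dd f x v := by
  have key : ∀ τ : ℝ, 0 < τ →
      (f (x + τ • (c • v)) - f x) / τ = c * ((f (x + (τ*c) • v) - f x) / (τ*c)) := by
    intro τ hτ
    rw [smul_smul]
    field_simp
  apply le_antisymm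
  · rw [← div_le_iff₀' hc]
    apply le_dd
    intro σ hσ
    rw [div_le_iff₀' hc]
    have h1 : dd f x (c • v) ≤ (f (x + (σ/c) • (c • v)) - f x) / (σ/c) :=
      dd_le hf x (c • v) (by positivity)
    rw [key (σ/c) (by positivity)] at h1
    have hσc : σ/c*c = σ := by field_simp
    rw [hσc] at h1
    exact h1
  · apply le_dd
    intro τ hτ
    rw [key τ hτ]
    have h1 : dd f x v ≤ (f (x + (τ*c) • v) - f x) / (τ*c) := dd_le hf x v (by positivity)
    nlinarith [h1]

lemma dd_add {f : Eucl n → ℝ} (hf : ConvexOn ℝ univ f) (x : Eucl n) (v w : Eucl n) :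
    dd f x (v + w) ≤ dd f x v + dd f x w := by
  apply le_of_forall_pos_le_add
  intro ε hε
  obtain ⟨τ1, hτ1, hq1⟩ := dd_lt (show dd f x v < dd f x v + ε/2 by linarith)
  obtain ⟨τ2, hτ2, hq2⟩ := dd_lt (show dd f x w < dd f x w + ε/2 by linarith)
  set τ := min τ1 τ2 / 2 with hτdef
  have hτpos : 0 < τ := by positivity
  have h2τ1 : 2*τ ≤ τ1 := by
    have := min_le_left τ1 τ2; rw [hτdef]; linarith
  have h2τ2 : 2*τ ≤ τ2 := by
    have := min_le_right τ1 τ2; rw [hτdef]; linarith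
  have hmid : f (x + τ • (v + w)) ≤
      (1/2) * f (x + (2*τ) • v) + (1/2) * f (x + (2*τ) • w) := by
    have ha : (0:ℝ) ≤ 1/2 := by norm_num
    have hcomb : ((1:ℝ)/2) • (x + (2*τ) • v) + ((1:ℝ)/2) • (x + (2*τ) • w)
        = x + τ • (v + w) := by
      match_scalars <;> ring
    have key := hf.2 (mem_univ (x + (2*τ) • v)) (mem_univ (x + (2*τ) • w)) ha ha (by norm_num)
    rw [hcomb] at key
    exact key
  have hsplit : (f (x + τ • (v + w)) - f x) / τ ≤
      (f (x + (2*τ) • v) - f x) / (2*τ) + (f (x + (2*τ) • w) - f x) / (2*τ) := by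
    rw [← add_div, div_le_div_iff₀ hτpos (by positivity)]
    nlinarith [hmid]
  have hmv : (f (x + (2*τ) • v) - f x) / (2*τ) ≤ (f (x + τ1 • v) - f x) / τ1 :=
    slope_mono hf x v (by positivity) h2τ1
  have hmw : (f (x + (2*τ) • w) - f x) / (2*τ) ≤ (f (x + τ2 • w) - f x) / τ2 :=
    slope_mono hf x w (by positivity) h2τ2
  have hd : dd f x (v + w) ≤ (f (x + τ • (v + w)) - f x) / τ := dd_le hf x _ hτpos
  linarith

lemma dd_le_sub {f : Eucl n → ℝ} (hf : ConvexOn ℝ univ f) (x y : Eucl n) :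
    dd f x (y - x) ≤ f y - f x := by
  have := dd_le hf x (y - x) one_pos
  simpa using this


lemma exists_subgrad {f : Eucl n → ℝ} (hn : 1 ≤ n) (hf : ConvexOn ℝ univ f) (x d : Eucl n) :
    ∃ ξ ∈ subdiff f x, dd f x d ≤ ⟪ξ, d⟫ := by
  suffices h : ∀ d : Eucl n, d ≠ 0 → ∃ ξ ∈ subdiff f x, dd f x d ≤ ⟪ξ, d⟫ by
    rcases eq_or_ne d 0 with rfl | hd
    · have hd0 : (EuclideanSpace.single (⟨0, hn⟩ : Fin n) (1:ℝ)) ≠ 0 := by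
        intro hcon
        have := congrArg (· (⟨0, hn⟩ : Fin n)) hcon
        simp [EuclideanSpace.single_apply] at this
      obtain ⟨ξ, hξ, _⟩ := h _ hd0
      refine ⟨ξ, hξ, ?_⟩
      rw [dd_zero, inner_zero_right]
    · exact h d hd
  intro d hd
  set N : Eucl n → ℝ := fun v => dd f x v with hN
  have N_hom : ∀ c : ℝ, 0 < c → ∀ v, N (c • v) = c * N v := fun c hc v => dd_smul hf x hc v
  have N_add : ∀ v w, N (v + w) ≤ N v + N w := dd_add hf x
  have N_zero : N 0 = 0 := dd_zero f x
  have hdom : ∀ z : (LinearPMap.mkSpanSingleton d (N d) hd : (Eucl n) →ₗ.[ℝ] ℝ).domain,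
      (LinearPMap.mkSpanSingleton d (N d) hd : (Eucl n) →ₗ.[ℝ] ℝ) z ≤ N z := by
    rintro ⟨z, hz⟩
    obtain ⟨c, rfl⟩ := Submodule.mem_span_singleton.1 hz
    rw [LinearPMap.mkSpanSingleton'_apply]
    show c • N d ≤ N (c • d)
    rcases lt_trichotomy c 0 with hc | hc | hc
    · have hrw : c • d = (-c) • (-d) := by module
      rw [hrw, N_hom (-c) (by linarith) (-d)]
      have hsum : (0:ℝ) ≤ N d + N (-d) := by
        have := N_add d (-d)
        simp only [add_neg_cancel, N_zero] at this
        linarith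
      simp only [smul_eq_mul]
      nlinarith
    · subst hc; simp [N_zero]
    · rw [N_hom c hc d, smul_eq_mul]
  obtain ⟨gl, hg1, hg2⟩ := exists_extension_of_le_sublinear _ N N_hom N_add hdom
  set ξ : Eucl n := (InnerProductSpace.toDual ℝ (Eucl n)).symm
    (LinearMap.toContinuousLinearMap gl) with hξdef
  have hξapp : ∀ z, ⟪ξ, z⟫ = gl z := fun z => InnerProductSpace.toDual_symm_apply
  have hmem : ξ ∈ subdiff f x := by
    intro y
    have h1 : gl (y - x) ≤ N (y - x) := hg2 (y - x)
    have h2 : N (y - x) ≤ f y - f x := dd_le_sub hf x y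
    have := hξapp (y - x)
    linarith [this ▸ (h1.trans h2)]
  refine ⟨ξ, hmem, ?_⟩
  have hval : gl d = N d := by
    have := hg1 ⟨d, Submodule.mem_span_singleton_self d⟩
    rw [this, LinearPMap.mkSpanSingleton_apply]
  rw [hξapp d, hval]

lemma exists_M {f : Eucl n → ℝ} (hf : ConvexOn ℝ univ f) (x : Eucl n) :
    ∃ M : ℝ, 0 ≤ M ∧ (∀ z : Eucl n, ‖z‖ ≤ 1 → f (x + z) ≤ f x + M * ‖z‖) ∧
      (∀ ξ ∈ subdiff f x, ‖ξ‖ ≤ M) := by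
  have hcont : Continuous f := by
    exact continuousOn_univ.1 (hf.continuousOn isOpen_univ)
  obtain ⟨z₀, hz₀, hmax⟩ := (isCompact_closedBall x 1).exists_isMaxOn
    ⟨x, Metric.mem_closedBall_self zero_le_one⟩ hcont.continuousOn
  set M : ℝ := f z₀ - f x with hM
  have hM0 : 0 ≤ M := by
    have hle : f x ≤ f z₀ := hmax (Metric.mem_closedBall_self zero_le_one)
    simp only [hM]; linarith
  have hball : ∀ z : Eucl n, ‖z‖ ≤ 1 → f (x + z) ≤ f x + M := by
    intro z hz
    have : x + z ∈ Metric.closedBall x 1 := by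
      rw [Metric.mem_closedBall, dist_eq_norm, add_sub_cancel_left]; exact hz
    have hle : f (x + z) ≤ f z₀ := hmax this
    simp only [hM]; linarith
  have hgrow : ∀ z : Eucl n, ‖z‖ ≤ 1 → f (x + z) ≤ f x + M * ‖z‖ := by
    intro z hz
    rcases eq_or_ne z 0 with rfl | hz0
    · simp
    have hzpos : 0 < ‖z‖ := norm_pos_iff.2 hz0
    set u : Eucl n := ‖z‖⁻¹ • z with hu
    have hunorm : ‖u‖ = 1 := by
      rw [hu, norm_smul, norm_inv, norm_norm, inv_mul_cancel₀ (ne_of_gt hzpos)]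
    have hcomb : (1 - ‖z‖) • x + ‖z‖ • (x + u) = x + z := by
      have h1 : ‖z‖ • u = z := by
        rw [hu, smul_smul, mul_inv_cancel₀ (ne_of_gt hzpos), one_smul]
      rw [smul_add, h1, ← add_assoc, ← add_smul]
      norm_num
    have key := hf.2 (mem_univ x) (mem_univ (x + u))
      (show (0:ℝ) ≤ 1 - ‖z‖ by linarith) (show (0:ℝ) ≤ ‖z‖ from hzpos.le)
      (show 1 - ‖z‖ + ‖z‖ = 1 by ring)
    rw [hcomb] at key
    have key' : f (x + z) ≤ (1 - ‖z‖) * f x + ‖z‖ * f (x + u) := key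
    have hfu : f (x + u) ≤ f x + M := hball u (le_of_eq hunorm)
    nlinarith [key']
  refine ⟨M, hM0, hgrow, ?_⟩
  intro ξ hξ
  rcases eq_or_ne ξ 0 with rfl | hξ0
  · simpa using hM0
  have hξpos : 0 < ‖ξ‖ := norm_pos_iff.2 hξ0
  set u : Eucl n := ‖ξ‖⁻¹ • ξ with hu
  have hunorm : ‖u‖ = 1 := by
    rw [hu, norm_smul, norm_inv, norm_norm, inv_mul_cancel₀ (ne_of_gt hξpos)]
  have h1 := hξ (x + u)
  have h2 : ⟪ξ, (x + u) - x⟫ = ‖ξ‖ := by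
    rw [add_sub_cancel_left, hu, real_inner_smul_right, real_inner_self_eq_norm_sq]
    field_simp
  rw [h2] at h1
  have h3 : f (x + u) ≤ f x + M * 1 := by
    have := hgrow u (le_of_eq hunorm)
    rwa [hunorm] at this
  linarith

/-! ### Auxiliary machinery for the proof -/

lemma subdiffE_convex (h : Eucl n → EReal) (x : Eucl n) : Convex ℝ (subdiffE h x) := by
  intro ξ hξ ζ hζ a b ha hb hab
  intro y
  by_cases hbot : h x = ⊥
  · rw [hbot, EReal.bot_add]; exact bot_le
  by_cases htop : h x = ⊤
  · have h1 := hξ y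
    rw [htop, EReal.top_add_coe] at h1
    have hy : h y = ⊤ := top_le_iff.1 h1
    rw [htop, hy, EReal.top_add_coe]
  obtain ⟨r, hr⟩ : ∃ r : ℝ, h x = (r : EReal) := ⟨(h x).toReal, (EReal.coe_toReal htop hbot).symm⟩
  have h1 := hξ y
  have h2 := hζ y
  rw [hr] at h1 h2 ⊢
  rw [← EReal.coe_add] at h1 h2 ⊢
  have hin : ⟪a • ξ + b • ζ, y - x⟫ = a * ⟪ξ, y - x⟫ + b * ⟪ζ, y - x⟫ := by
    rw [inner_add_left, real_inner_smul_left, real_inner_smul_left]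
  rw [hin]
  by_cases hytop : h y = ⊤
  · rw [hytop]; exact le_top
  have hybot : h y ≠ ⊥ := by
    intro hcon
    rw [hcon, le_bot_iff] at h1
    exact EReal.coe_ne_bot _ h1
  obtain ⟨s, hs⟩ : ∃ s : ℝ, h y = (s : EReal) := ⟨(h y).toReal, (EReal.coe_toReal hytop hybot).symm⟩
  rw [hs] at h1 h2 ⊢
  rw [EReal.coe_le_coe_iff] at h1 h2 ⊢
  have e1 : a * r + b * r = r := by rw [← add_mul, hab, one_mul]
  have e2 : a * s + b * s = s := by rw [← add_mul, hab, one_mul]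
  nlinarith [mul_le_mul_of_nonneg_left h1 ha, mul_le_mul_of_nonneg_left h2 hb]

lemma feasSet_convex {g : T → Eucl n → EReal} (hgconv : ∀ t, ConvexE (g t)) :
    Convex ℝ (feasSet g) := by
  intro x hx y hy a b ha hb hab
  intro t
  have h := hgconv t x y a b ha hb hab
  refine le_trans h ?_
  have lem : ∀ (c : ℝ) (z : EReal), 0 ≤ c → z ≤ 0 → (c : EReal) * z ≤ 0 := by
    intro c z hc hz
    rcases eq_or_lt_of_le hc with rfl | hc
    · simp
    induction z with
    | bot =>
        rw [EReal.coe_mul_bot_of_pos (by exact_mod_cast hc)]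
        exact bot_le
    | coe s =>
        rw [← EReal.coe_mul]
        have hs : s ≤ 0 := by exact_mod_cast hz
        exact_mod_cast mul_nonpos_iff.2 (Or.inl ⟨hc.le, hs⟩)
    | top => exact absurd hz (by simp)
  have h1 : (a : EReal) * g t x ≤ 0 := lem a _ ha (hx t)
  have h2 : (b : EReal) * g t y ≤ 0 := lem b _ hb (hy t)
  calc (a : EReal) * g t x + (b : EReal) * g t y ≤ 0 + 0 := add_le_add h1 h2
    _ = 0 := by simp

lemma negPolar_convex (M : Set (Eucl n)) : Convex ℝ (negPolar M) := by
  intro d1 h1 d2 h2 a b ha hb hab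
  intro ξ hξ
  have e1 := h1 ξ hξ
  have e2 := h2 ξ hξ
  have hin : ⟪ξ, a • d1 + b • d2⟫ = a * ⟪ξ, d1⟫ + b * ⟪ξ, d2⟫ := by
    rw [inner_add_right, real_inner_smul_right, real_inner_smul_right]
  rw [hin]
  nlinarith [mul_le_mul_of_nonneg_left e1 ha, mul_le_mul_of_nonneg_left e2 hb]

lemma negPolar_isClosed (M : Set (Eucl n)) : IsClosed (negPolar M) := by
  have : negPolar M = ⋂ ξ ∈ M, {d : Eucl n | ⟪ξ, d⟫ ≤ 0} := by
    ext d; simp [negPolar, Set.mem_iInter]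
  rw [this]
  exact isClosed_biInter fun ξ _ =>
    isClosed_le (continuous_const.inner continuous_id) continuous_const

lemma zero_mem_negPolar (M : Set (Eucl n)) : (0 : Eucl n) ∈ negPolar M := by
  intro ξ _
  rw [inner_zero_right]

lemma negPolar_smul_mem {M : Set (Eucl n)} {ν : Eucl n} (hν : ν ∈ negPolar M) {c : ℝ}
    (hc : 0 ≤ c) : c • ν ∈ negPolar M := by
  intro ξ hξ
  rw [real_inner_smul_right]
  exact mul_nonpos_iff.2 (Or.inl ⟨hc, hν ξ hξ⟩)

/-- The cone generated by `S - xh`. -/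
def Dcone (S : Set (Eucl n)) (xh : Eucl n) : Set (Eucl n) :=
  {v | ∃ c : ℝ, 0 ≤ c ∧ ∃ s ∈ S, v = c • (s - xh)}

lemma Dcone_zero_mem {S : Set (Eucl n)} {xh : Eucl n} (hx : xh ∈ S) : (0 : Eucl n) ∈ Dcone S xh :=
  ⟨0, le_rfl, xh, hx, by simp⟩

lemma Dcone_smul_mem {S : Set (Eucl n)} {xh : Eucl n} {v : Eucl n} (hv : v ∈ Dcone S xh)
    {c : ℝ} (hc : 0 ≤ c) : c • v ∈ Dcone S xh := by
  obtain ⟨c', hc', s, hs, rfl⟩ := hv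
  exact ⟨c * c', mul_nonneg hc hc', s, hs, smul_smul c c' _⟩

lemma Dcone_convex {S : Set (Eucl n)} {xh : Eucl n} (hS : Convex ℝ S) :
    Convex ℝ (Dcone S xh) := by
  rintro v1 ⟨c1, hc1, s1, hs1, rfl⟩ v2 ⟨c2, hc2, s2, hs2, rfl⟩ a b ha hb hab
  set γ := a * c1 + b * c2 with hγ
  have hγ0 : 0 ≤ γ := by positivity
  rcases eq_or_lt_of_le hγ0 with hγe | hγp
  · have h1 : a * c1 = 0 ∧ b * c2 = 0 := by
      constructor <;> nlinarith [mul_nonneg ha hc1, mul_nonneg hb hc2]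
    have hz : a • (c1 • (s1 - xh)) + b • (c2 • (s2 - xh)) = 0 := by
      rw [smul_smul, smul_smul, h1.1, h1.2]; simp
    rw [hz]
    exact ⟨0, le_rfl, s1, hs1, by simp⟩
  · refine ⟨γ, hγ0, (a*c1/γ) • s1 + (b*c2/γ) • s2,
      hS hs1 hs2 (by positivity) (by positivity) (by field_simp; exact hγ.symm), ?_⟩
    have hγne : γ ≠ 0 := ne_of_gt hγp
    match_scalars <;> field_simp <;> ring

lemma contingent_subset_closure_Dcone {S : Set (Eucl n)} {xh : Eucl n} :
    contingentCone S xh ⊆ closure (Dcone S xh) := by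
  rintro v ⟨τ, w, hτpos, hτ0, hwv, hmem⟩
  refine mem_closure_of_tendsto hwv (Eventually.of_forall fun r => ?_)
  refine ⟨(τ r)⁻¹, (inv_nonneg).2 (hτpos r).le, xh + τ r • w r, hmem r, ?_⟩
  rw [add_sub_cancel_left, smul_smul, inv_mul_cancel₀ (ne_of_gt (hτpos r)), one_smul]

lemma closure_Dcone_subset_contingent {S : Set (Eucl n)} {xh : Eucl n} (hS : Convex ℝ S)
    (hx : xh ∈ S) : closure (Dcone S xh) ⊆ contingentCone S xh := by
  intro v hv
  obtain ⟨u, hu, huv⟩ := mem_closure_iff_seq_limit.1 hv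
  choose c hc s hsS hrep using hu
  refine ⟨fun r => (1/(r+1 : ℝ)) * (1/(c r + 1)), u, ?_, ?_, huv, ?_⟩
  · intro r
    have := hc r
    positivity
  · apply squeeze_zero (fun r => by have := hc r; positivity)
      (g := fun r : ℕ => 1/(r+1 : ℝ))
    · intro r
      have h1 : (0:ℝ) < c r + 1 := by have := hc r; linarith
      have h2 : 1/(c r + 1) ≤ 1 := by
        rw [div_le_one h1]; have := hc r; linarith
      have h3 : (0:ℝ) ≤ 1/(r+1 : ℝ) := by positivity
      nlinarith
    · exact tendsto_one_div_add_atTop_nhds_zero_nat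
  · intro r
    set θ : ℝ := ((1/(r+1 : ℝ)) * (1/(c r + 1))) * c r with hθ
    have hc1 : (0:ℝ) < c r + 1 := by have := hc r; linarith
    have hr1 : (0:ℝ) < (r:ℝ) + 1 := by positivity
    have hθ0 : 0 ≤ θ := by have := hc r; positivity
    have hθ1 : θ ≤ 1 := by
      have h1 : (1:ℝ)/(r+1 : ℝ) ≤ 1 := by
        rw [div_le_one hr1]; linarith [Nat.cast_nonneg (α := ℝ) r]
      have h2 : (1/(c r + 1)) * c r ≤ 1 := by
        rw [div_mul_eq_mul_div, div_le_one hc1]; linarith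
      have hcr := hc r
      calc θ = (1/(r+1 : ℝ)) * ((1/(c r + 1)) * c r) := by rw [hθ]; ring
        _ ≤ 1 * 1 := by
            apply mul_le_mul h1 h2 (by positivity) (by norm_num)
        _ = 1 := by norm_num
    have hrew : xh + ((1/(r+1 : ℝ)) * (1/(c r + 1))) • u r = (1 - θ) • xh + θ • s r := by
      rw [hrep r, hθ]
      match_scalars <;> ring
    rw [hrew]
    exact hS hx (hsS r) (by linarith) hθ0 (by ring)

lemma mem_contingent_of_polar {S : Set (Eucl n)} {xh : Eucl n} (hS : Convex ℝ S)
    (hx : xh ∈ S) {d : Eucl n} (hd : ∀ ν ∈ normalCone S xh, ⟪ν, d⟫ ≤ 0) :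
    d ∈ contingentCone S xh := by
  apply closure_Dcone_subset_contingent hS hx
  by_contra hdc
  obtain ⟨ℓ, u, hu1, hu2⟩ := geometric_hahn_banach_closed_point
    ((Dcone_convex hS).closure) isClosed_closure hdc
  have hu0 : 0 < u := by
    have := hu1 0 (subset_closure (Dcone_zero_mem hx))
    rwa [map_zero] at this
  have hneg : ∀ a ∈ Dcone S xh, ℓ a ≤ 0 := by
    intro a ha
    by_contra hpos
    push_neg at hpos
    have hcall : ∀ c : ℝ, 0 ≤ c → c * ℓ a < u := by
      intro c hc
      have hmem : c • a ∈ closure (Dcone S xh) := subset_closure (Dcone_smul_mem ha hc)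
      have := hu1 _ hmem
      rwa [map_smul, smul_eq_mul] at this
    have h1 := hcall ((u+1)/(ℓ a)) (by positivity)
    rw [div_mul_cancel₀ _ (ne_of_gt hpos)] at h1
    linarith
  set e := (InnerProductSpace.toDual ℝ (Eucl n)).symm ℓ with he
  have heapp : ∀ z, ⟪e, z⟫ = ℓ z := fun z => InnerProductSpace.toDual_symm_apply
  have heN : e ∈ normalCone S xh := by
    intro ξ hξ
    have hξ' : ξ ∈ closure (Dcone S xh) := contingent_subset_closure_Dcone hξ
    have hcl : closure (Dcone S xh) ⊆ {z : Eucl n | ℓ z ≤ 0} := by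
      apply closure_minimal hneg
      exact isClosed_le ℓ.continuous continuous_const
    have := hcl hξ'
    rw [real_inner_comm, heapp]
    exact this
  have hfin := hd e heN
  rw [heapp] at hfin
  linarith [hu2, hfin]

/-- The set of convex combinations `∑ αᵢ ξᵢ` with `ξᵢ ∈ ∂fᵢ(x)`. -/
def KSet (f : Fin p → Eucl n → ℝ) (x : Eucl n) : Set (Eucl n) :=
  (fun q : (Fin p → ℝ) × (Fin p → Eucl n) => ∑ i, q.1 i • q.2 i) ''
    ((stdSimplex ℝ (Fin p)) ×ˢ (Set.univ.pi fun i => subdiff (f i) x))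

lemma mem_KSet_iff {f : Fin p → Eucl n → ℝ} {x : Eucl n} {w : Eucl n} :
    w ∈ KSet f x ↔ ∃ (α : Fin p → ℝ) (ξ : Fin p → Eucl n),
      (∀ i, 0 ≤ α i) ∧ ∑ i, α i = 1 ∧ (∀ i, ξ i ∈ subdiff (f i) x) ∧ ∑ i, α i • ξ i = w := by
  constructor
  · rintro ⟨⟨α, ξ⟩, ⟨⟨hα0, hα1⟩, hξ⟩, rfl⟩
    exact ⟨α, ξ, hα0, hα1, fun i => hξ i (mem_univ i), rfl⟩
  · rintro ⟨α, ξ, hα0, hα1, hξ, rfl⟩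
    exact ⟨⟨α, ξ⟩, ⟨⟨hα0, hα1⟩, fun i _ => hξ i⟩, rfl⟩

lemma KSet_isCompact {f : Fin p → Eucl n → ℝ} (hf : ∀ i, ConvexOn ℝ univ (f i)) (x : Eucl n) :
    IsCompact (KSet f x) := by
  have hsub : ∀ i, IsCompact (subdiff (f i) x) := by
    intro i
    obtain ⟨M, hM0, _, hMsub⟩ := exists_M (hf i) x
    rw [Metric.isCompact_iff_isClosed_bounded]
    refine ⟨subdiff_isClosed _ _, ?_⟩
    exact (Metric.isBounded_iff_subset_closedBall 0).2
      ⟨M, fun ξ hξ => by simpa [Metric.mem_closedBall] using hMsub ξ hξ⟩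
  have h1 : IsCompact ((stdSimplex ℝ (Fin p)) ×ˢ (Set.univ.pi fun i => subdiff (f i) x)) :=
    (isCompact_stdSimplex ℝ (Fin p)).prod (isCompact_univ_pi hsub)
  exact h1.image (by
    apply continuous_finset_sum
    intro i _
    exact ((continuous_apply i).comp continuous_fst).smul
      ((continuous_apply i).comp continuous_snd))

lemma KSet_convex (f : Fin p → Eucl n → ℝ) (x : Eucl n) : Convex ℝ (KSet f x) := by
  intro w1 h1 w2 h2 a b ha hb hab
  rw [mem_KSet_iff] at h1 h2
  obtain ⟨α, ξ, hα0, hα1, hξ, rfl⟩ := h1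
  obtain ⟨α', ξ', hα0', hα1', hξ', rfl⟩ := h2
  rw [mem_KSet_iff]
  classical
  refine ⟨fun i => a * α i + b * α' i,
    fun i => if h : a * α i + b * α' i = 0 then ξ i
      else (a * α i + b * α' i)⁻¹ • ((a * α i) • ξ i + (b * α' i) • ξ' i),
    ?_, ?_, ?_, ?_⟩
  · intro i
    have := hα0 i; have := hα0' i
    positivity
  · rw [Finset.sum_add_distrib, ← Finset.mul_sum, ← Finset.mul_sum, hα1, hα1']
    linarith
  · intro i
    by_cases h : a * α i + b * α' i = 0
    · simp only [h, dif_pos]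
      exact hξ i
    · simp only [h, dif_neg, not_false_iff]
      have hγpos : 0 < a * α i + b * α' i :=
        lt_of_le_of_ne (by have := hα0 i; have := hα0' i; positivity) (Ne.symm h)
      have hrw : (a * α i + b * α' i)⁻¹ • ((a * α i) • ξ i + (b * α' i) • ξ' i)
          = ((a * α i)/(a * α i + b * α' i)) • ξ i
            + ((b * α' i)/(a * α i + b * α' i)) • ξ' i := by
        rw [smul_add, smul_smul, smul_smul]
        congr 1 <;> congr 1 <;> field_simp
      rw [hrw]
      exact subdiff_convex (f i) x (hξ i) (hξ' i)
        (by have := hα0 i; positivity) (by have := hα0' i; positivity)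
        (by field_simp)
  · rw [Finset.smul_sum, Finset.smul_sum, ← Finset.sum_add_distrib]
    apply Finset.sum_congr rfl
    intro i _
    by_cases h : a * α i + b * α' i = 0
    · have h1 : a * α i = 0 ∧ b * α' i = 0 := by
        constructor <;>
          nlinarith [mul_nonneg ha (hα0 i), mul_nonneg hb (hα0' i)]
      simp [smul_smul, h1.1, h1.2, h]
    · simp only [h, dif_neg, not_false_iff]
      rw [smul_inv_smul₀ h]
      simp [smul_smul]

lemma single_mem_KSet {f : Fin p → Eucl n → ℝ} {x : Eucl n} (ξ0 : Fin p → Eucl n)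
    (hξ0 : ∀ j, ξ0 j ∈ subdiff (f j) x) {i : Fin p} {ξ : Eucl n}
    (hξ : ξ ∈ subdiff (f i) x) : ξ ∈ KSet f x := by
  classical
  rw [mem_KSet_iff]
  refine ⟨fun j => if j = i then 1 else 0, fun j => if j = i then ξ else ξ0 j,
    ?_, ?_, ?_, ?_⟩
  · intro j; by_cases h : j = i <;> simp [h]
  · simp [Finset.sum_ite_eq']
  · intro j; by_cases h : j = i <;> simp [h, hξ, hξ0 j]
  · have : ∀ j : Fin p, (if j = i then (1:ℝ) else 0) • (if j = i then ξ else ξ0 j)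
        = if j = i then ξ else 0 := by
      intro j; by_cases h : j = i <;> simp [h]
    rw [Finset.sum_congr rfl (fun j _ => this j), Finset.sum_ite_eq']
    simp

lemma coneHull_rep {g : T → Eucl n → EReal} {xh : Eucl n} {c : Eucl n}
    (hc : c ∈ coneHull (GSet g xh)) :
    ∃ (Ts : Finset T) (β : T → ℝ) (ζ : T → Eucl n),
      (∀ t ∈ Ts, t ∈ activeIx g xh) ∧ (∀ t ∈ Ts, 0 ≤ β t) ∧
      (∀ t ∈ Ts, ζ t ∈ subdiffE (g t) xh) ∧ ∑ t ∈ Ts, β t • ζ t = c := by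
  classical
  obtain ⟨s, co, hsub, hnn, rfl⟩ := hc
  set s' := s.filter (fun v => co v ≠ 0) with hs'
  have hsum : ∑ v ∈ s', co v • v = ∑ v ∈ s, co v • v := by
    apply Finset.sum_filter_of_ne
    intro v hv h
    intro hco
    exact h (by rw [hco, zero_smul])
  rcases s'.eq_empty_or_nonempty with he | ⟨v₀, hv₀⟩
  · refine ⟨∅, 0, 0, by simp, by simp, by simp, ?_⟩
    rw [← hsum, he]
    simp
  · have hch : ∀ v ∈ s', ∃ t, t ∈ activeIx g xh ∧ v ∈ subdiffE (g t) xh := by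
      intro v hv
      have hvs : v ∈ s := (Finset.mem_filter.1 hv).1
      have hvG : v ∈ GSet g xh := hsub hvs
      simpa [GSet, mem_iUnion] using hvG
    have hT : Nonempty T := ⟨(hch v₀ hv₀).choose⟩
    set tc : Eucl n → T := fun v =>
      if h : ∃ t, t ∈ activeIx g xh ∧ v ∈ subdiffE (g t) xh then h.choose
      else Classical.arbitrary T with htcdef
    have htc : ∀ v ∈ s', tc v ∈ activeIx g xh ∧ v ∈ subdiffE (g (tc v)) xh := by
      intro v hv
      have h := hch v hv
      simp only [htcdef, dif_pos h]
      exact h.choose_spec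
    set Ts := s'.image tc with hTs
    set β : T → ℝ := fun t => ∑ v ∈ s'.filter (fun v => tc v = t), co v with hβ
    have hβpos : ∀ t ∈ Ts, 0 < β t := by
      intro t ht
      obtain ⟨v, hv, rfl⟩ := Finset.mem_image.1 ht
      apply Finset.sum_pos
      · intro w hw
        have hw' : w ∈ s' := (Finset.mem_filter.1 hw).1
        have hw1 : w ∈ s := (Finset.mem_filter.1 hw').1
        have hw2 : co w ≠ 0 := (Finset.mem_filter.1 hw').2
        exact lt_of_le_of_ne (hnn w hw1) (Ne.symm hw2)
      · exact ⟨v, Finset.mem_filter.2 ⟨hv, rfl⟩⟩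
    set ζ : T → Eucl n := fun t => (β t)⁻¹ • ∑ v ∈ s'.filter (fun v => tc v = t), co v • v
      with hζ
    refine ⟨Ts, β, ζ, ?_, ?_, ?_, ?_⟩
    · intro t ht
      obtain ⟨v, hv, rfl⟩ := Finset.mem_image.1 ht
      exact (htc v hv).1
    · intro t ht
      exact (hβpos t ht).le
    · intro t ht
      have hrw : ζ t = ∑ v ∈ s'.filter (fun v => tc v = t), ((β t)⁻¹ * co v) • v := by
        rw [hζ]
        dsimp only
        rw [Finset.smul_sum]
        apply Finset.sum_congr rfl
        intro v _
        rw [smul_smul]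
      rw [hrw]
      apply (subdiffE_convex (g t) xh).sum_mem
      · intro v hv
        have hv' : v ∈ s' := (Finset.mem_filter.1 hv).1
        have hv1 : v ∈ s := (Finset.mem_filter.1 hv').1
        exact mul_nonneg (inv_nonneg.2 (hβpos t ht).le) (hnn v hv1)
      · rw [← Finset.mul_sum]
        exact inv_mul_cancel₀ (ne_of_gt (hβpos t ht))
      · intro v hv
        have hv' : v ∈ s' := (Finset.mem_filter.1 hv).1
        have heq : tc v = t := (Finset.mem_filter.1 hv).2
        have := (htc v hv').2
        rwa [heq] at this
    · have hstep : ∀ t ∈ Ts, β t • ζ t = ∑ v ∈ s'.filter (fun v => tc v = t), co v • v := by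
        intro t ht
        rw [hζ]
        dsimp only
        exact smul_inv_smul₀ (ne_of_gt (hβpos t ht)) _
      rw [Finset.sum_congr rfl hstep,
        Finset.sum_fiberwise_of_maps_to (fun v hv => Finset.mem_image_of_mem tc hv), hsum]

/-- If LFMCQ holds at `x̂ ∈ S`, then `x̂` is a weak efficient solution of `(P)`
if and only if the weak KKT condition holds at `x̂`. -/
theorem stmt4
    (hn : 1 ≤ n) (hp : 1 ≤ p)
    (f : Fin p → Eucl n → ℝ) (g : T → Eucl n → EReal)
    (hf : ∀ i, ConvexOn ℝ Set.univ (f i))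
    (hgconv : ∀ t, ConvexE (g t))
    (hgproper : ∀ t, ProperE (g t))
    (hglsc : ∀ t, LowerSemicontinuous (g t))
    (xh : Eucl n) (hxS : xh ∈ feasSet g)
    (hlfm : LFMCQ g xh) :
    WeakEff f (feasSet g) xh ↔ WeakKKT f g xh := by
  classical
  constructor
  · -- weak efficiency → weak KKT
    intro hW
    choose ξ0 hξ0 hdd0 using fun i => exists_subgrad hn (hf i) xh 0
    choose M hM0 hMgrow hMsub using fun i => exists_M (hf i) xh
    have i₀ : Fin p := ⟨0, hp⟩
    have hKne : (KSet f xh).Nonempty := ⟨ξ0 i₀, single_mem_KSet ξ0 hξ0 (hξ0 i₀)⟩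
    have hmain : (0 : Eucl n) ∈ KSet f xh + normalCone (feasSet g) xh := by
      by_contra h0
      have hAconv : Convex ℝ (KSet f xh + normalCone (feasSet g) xh) :=
        (KSet_convex f xh).add (negPolar_convex _)
      have hAclosed : IsClosed (KSet f xh + normalCone (feasSet g) xh) :=
        (negPolar_isClosed _).add_left_of_isCompact (KSet_isCompact hf xh)
      obtain ⟨ℓ, u, hu1, hu2⟩ := geometric_hahn_banach_closed_point hAconv hAclosed h0
      rw [map_zero] at hu2
      set d := (InnerProductSpace.toDual ℝ (Eucl n)).symm ℓ with hd
      have hdapp : ∀ z, ⟪d, z⟫ = ℓ z := fun z => InnerProductSpace.toDual_symm_apply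
      have hsub_lt : ∀ i, ∀ ξ ∈ subdiff (f i) xh, ⟪ξ, d⟫ < u := by
        intro i ξ hξ
        have hmem : ξ ∈ KSet f xh + normalCone (feasSet g) xh := by
          have h0' : ξ = ξ + 0 := (add_zero ξ).symm
          rw [h0']
          exact Set.add_mem_add (single_mem_KSet ξ0 hξ0 hξ) (zero_mem_negPolar _)
        rw [real_inner_comm, hdapp]
        exact hu1 ξ hmem
      have hdN : ∀ ν ∈ normalCone (feasSet g) xh, ⟪ν, d⟫ ≤ 0 := by
        intro ν hν
        by_contra hpos
        push_neg at hpos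
        obtain ⟨k₀, hk₀⟩ := hKne
        have hcall : ∀ c : ℝ, 0 ≤ c → ℓ k₀ + c * ℓ ν < u := by
          intro c hc
          have hmem : k₀ + c • ν ∈ KSet f xh + normalCone (feasSet g) xh :=
            Set.add_mem_add hk₀ (negPolar_smul_mem hν hc)
          have := hu1 _ hmem
          rwa [map_add, map_smul, smul_eq_mul] at this
        have hℓν : 0 < ℓ ν := by
          rw [← hdapp ν]
          rwa [real_inner_comm] at hpos
        set cc := max ((u - ℓ k₀)/(ℓ ν) + 1) 1 with hcc
        have hcc0 : (0:ℝ) ≤ cc := le_trans zero_le_one (le_max_right _ _)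
        have h1 := hcall cc hcc0
        have h2 : (u - ℓ k₀)/(ℓ ν) < cc := lt_of_lt_of_le (lt_add_one _) (le_max_left _ _)
        rw [div_lt_iff₀ hℓν] at h2
        linarith
      have hdC : d ∈ contingentCone (feasSet g) xh :=
        mem_contingent_of_polar (feasSet_convex hgconv) hxS hdN
      obtain ⟨τ, w, hτpos, hτ0, hwd, hmemS⟩ := hdC
      have hu0 : u < 0 := hu2
      have hτi : ∀ i, ∃ τi : ℝ, 0 < τi ∧ ∀ σ : ℝ, 0 < σ → σ ≤ τi →
          f i (xh + σ • d) - f i xh ≤ σ * u := by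
        intro i
        have hddi : dd (f i) xh d < u := by
          obtain ⟨ξ, hξm, hξv⟩ := exists_subgrad hn (hf i) xh d
          exact lt_of_le_of_lt hξv (hsub_lt i ξ hξm)
        obtain ⟨τi, hτip, hq⟩ := dd_lt hddi
        refine ⟨τi, hτip, fun σ hσ hστ => ?_⟩
        have hm := slope_mono (hf i) xh d hσ hστ
        have hlt : (f i (xh + σ • d) - f i xh)/σ < u := lt_of_le_of_lt hm hq
        rw [div_lt_iff₀ hσ] at hlt
        nlinarith
      choose τs hτs1 hτs2 using hτi
      have hnorm0 : Tendsto (fun r => ‖w r - d‖) atTop (𝓝 0) := by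
        have hsub : Tendsto (fun r => w r - d) atTop (𝓝 (d - d)) :=
          hwd.sub tendsto_const_nhds
        rw [sub_self] at hsub
        simpa using hsub.norm
      have hprod0 : Tendsto (fun r => τ r * ‖w r - d‖) atTop (𝓝 0) := by
        have := hτ0.mul hnorm0
        simpa using this
      have hev : ∀ᶠ r in atTop,
          (∀ i, 2 * τ r ≤ τs i ∧ ‖w r - d‖ ≤ (-u)/(2*(M i + 1))) ∧
            2 * (τ r * ‖w r - d‖) ≤ 1 := by
        apply Filter.Eventually.and
        · rw [eventually_all]
          intro i
          apply Filter.Eventually.and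
          · have hev1 : ∀ᶠ r in atTop, τ r < τs i / 2 :=
              hτ0.eventually_lt_const (by linarith [hτs1 i])
            filter_upwards [hev1] with r hr
            linarith
          · have hpos : (0:ℝ) < (-u)/(2*(M i + 1)) :=
              div_pos (by linarith) (by linarith [hM0 i])
            have hev2 : ∀ᶠ r in atTop, ‖w r - d‖ < (-u)/(2*(M i + 1)) :=
              hnorm0.eventually_lt_const hpos
            filter_upwards [hev2] with r hr
            exact hr.le
        · have hev3 : ∀ᶠ r in atTop, τ r * ‖w r - d‖ < 1/2 :=
            hprod0.eventually_lt_const (by norm_num)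
          filter_upwards [hev3] with r hr
          linarith
      obtain ⟨r, hri, hr3⟩ := hev.exists
      refine hW ⟨xh + τ r • w r, hmemS r, fun i => ?_⟩
      obtain ⟨hr1, hr2⟩ := hri i
      have hτr := hτpos r
      have hmid : f i (xh + τ r • w r) ≤
          (1/2) * f i (xh + (2 * τ r) • d) + (1/2) * f i (xh + (2 * τ r) • (w r - d)) := by
        have hcomb : ((1:ℝ)/2) • (xh + (2 * τ r) • d) + ((1:ℝ)/2) • (xh + (2 * τ r) • (w r - d))
            = xh + τ r • w r := by
          match_scalars <;> ring
        have key := (hf i).2 (mem_univ (xh + (2 * τ r) • d))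
          (mem_univ (xh + (2 * τ r) • (w r - d)))
          (show (0:ℝ) ≤ 1/2 by norm_num) (show (0:ℝ) ≤ 1/2 by norm_num)
          (show (1:ℝ)/2 + 1/2 = 1 by norm_num)
        rw [hcomb] at key
        exact key
      have h1 : f i (xh + (2 * τ r) • d) - f i xh ≤ (2 * τ r) * u :=
        hτs2 i (2 * τ r) (by linarith) hr1
      have hz : ‖(2 * τ r) • (w r - d)‖ ≤ 1 := by
        rw [norm_smul, Real.norm_eq_abs, abs_of_pos (by linarith : (0:ℝ) < 2 * τ r)]
        calc (2 * τ r) * ‖w r - d‖ = 2 * (τ r * ‖w r - d‖) := by ring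
          _ ≤ 1 := hr3
      have h2 : f i (xh + (2 * τ r) • (w r - d)) ≤ f i xh + M i * ‖(2 * τ r) • (w r - d)‖ :=
        hMgrow i _ hz
      have hznorm : ‖(2 * τ r) • (w r - d)‖ = 2 * τ r * ‖w r - d‖ := by
        rw [norm_smul, Real.norm_eq_abs, abs_of_pos (by linarith : (0:ℝ) < 2 * τ r)]
      rw [hznorm] at h2
      have hMb : M i * ‖w r - d‖ ≤ -u/2 := by
        have e1 : M i * ‖w r - d‖ ≤ M i * ((-u)/(2*(M i + 1))) :=
          mul_le_mul_of_nonneg_left hr2 (hM0 i)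
        have e2 : M i * ((-u)/(2*(M i + 1))) ≤ -u/2 := by
          rw [← mul_div_assoc, div_le_div_iff₀ (by linarith [hM0 i] : (0:ℝ) < 2*(M i + 1))
            (by norm_num : (0:ℝ) < 2)]
          nlinarith [hM0 i]
        linarith
      nlinarith [hmid, h1, h2, mul_le_mul_of_nonneg_left hMb hτr.le,
        mul_neg_of_pos_of_neg hτr hu0, norm_nonneg (w r - d)]
    obtain ⟨k, hk, ν, hν, hkν⟩ := Set.mem_add.1 hmain
    rw [mem_KSet_iff] at hk
    obtain ⟨α, ξ, hα0, hα1, hξ, hksum⟩ := hk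
    have hν' : ν ∈ coneHull (GSet g xh) := by
      rw [← hlfm]; exact hν
    obtain ⟨Ts, β, ζ, h1, h2, h3, h4⟩ := coneHull_rep hν'
    exact ⟨α, Ts, β, ξ, ζ, hα0, hα1, h1, h2, hξ, h3, by rw [hksum, h4]; exact hkν⟩
  · -- weak KKT → weak efficiency
    intro hkkt
    rintro ⟨x, hxSf, hlt⟩
    obtain ⟨α, Ts, β, ξ, ζ, hα0, hα1, hTs, hβ, hξ, hζ, hsum⟩ := hkkt
    have hterm1 : ∀ i, ⟪ξ i, x - xh⟫ < 0 := by
      intro i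
      have h := hξ i x
      have := hlt i
      linarith
    have hterm2 : ∀ t ∈ Ts, ⟪ζ t, x - xh⟫ ≤ 0 := by
      intro t ht
      have hact : g t xh = 0 := hTs t ht
      have h := hζ t ht x
      rw [hact, zero_add] at h
      have hle : ((⟪ζ t, x - xh⟫ : ℝ) : EReal) ≤ (0 : EReal) := le_trans h (hxSf t)
      exact EReal.coe_nonpos.1 hle
    have hzero : (0:ℝ) = ∑ i, α i * ⟪ξ i, x - xh⟫ + ∑ t ∈ Ts, β t * ⟪ζ t, x - xh⟫ := by
      calc (0:ℝ) = ⟪∑ i, α i • ξ i + ∑ t ∈ Ts, β t • ζ t, x - xh⟫ := by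
            rw [hsum, inner_zero_left]
        _ = ∑ i, α i * ⟪ξ i, x - xh⟫ + ∑ t ∈ Ts, β t * ⟪ζ t, x - xh⟫ := by
            rw [inner_add_left, sum_inner, sum_inner]
            congr 1
            · exact Finset.sum_congr rfl fun i _ => real_inner_smul_left _ _ _
            · exact Finset.sum_congr rfl fun t _ => real_inner_smul_left _ _ _
    have hex : ∃ i, 0 < α i := by
      by_contra hno
      push_neg at hno
      have hzz : ∀ i, α i = 0 := fun i => le_antisymm (hno i) (hα0 i)
      rw [Finset.sum_congr rfl (fun i _ => hzz i)] at hα1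
      simp at hα1
    obtain ⟨j₀, hj₀⟩ := hex
    have h1 : ∑ i, α i * ⟪ξ i, x - xh⟫ < 0 := by
      have hle : ∀ i ∈ Finset.univ, α i * ⟪ξ i, x - xh⟫ ≤ (fun _ => (0:ℝ)) i := by
        intro i _
        exact mul_nonpos_iff.2 (Or.inl ⟨hα0 i, (hterm1 i).le⟩)
      have := Finset.sum_lt_sum hle ⟨j₀, Finset.mem_univ _,
        mul_neg_of_pos_of_neg hj₀ (hterm1 j₀)⟩
      simpa using this
    have h2 : ∑ t ∈ Ts, β t * ⟪ζ t, x - xh⟫ ≤ 0 :=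
      Finset.sum_nonpos fun t ht => mul_nonpos_iff.2 (Or.inl ⟨hβ t ht, hterm2 t ht⟩)
    linarith


end MOSIP
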